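/- Let C ⊆ ℝ_+^∞ be a closed set such that for every p ≥ 1, PROJ_p(C) is closed in ℝ_+^p and (z_1,...,z_p) ∈ PROJ_p(C) implies (z_1,...,z_p,0,0,...) ∈ C. Let μ_n (n ≥ 1) and μ_0 be elements of M(ℝ_+^∞ \ C). Then μ_n → μ_0 in M(ℝ_+^∞ \ C) if and only if for every p ≥ 1 with ℝ_+^p \ PROJ_p(C) ≠ ∅ one has ∫ (g ∘ PROJ_p) dμ_n → ∫ (g ∘ PROJ_p) dμ_0 for every bounded continuous g : ℝ_+^p \ PROJ_p(C) → [0,∞) whose support is at positive L^1-distance from PROJ_p(C); that is, the pushforwards μ_n ∘ PROJ_p^{-1} converge to μ_0 ∘ PROJ_p^{-1} in M(ℝ_+^p \ PROJ_p(C)). -/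

import Mathlib

open MeasureTheory Filter Topology Set ENNReal NNReal

noncomputable section

/-- The metric `d_∞` on `ℝ₊^∞ = (ℕ → ℝ≥0)` (indices shifted so that `x_1 = x 0`):
`d_∞(x,y) = Σ_{i≥1} 2^{-i} (|x_i − y_i| ∧ 1)`. -/
def dseq (x y : ℕ → ℝ≥0) : ℝ := ∑' i : ℕ, (2 : ℝ)⁻¹ ^ (i + 1) * min (dist (x i) (y i)) 1

/-- The `d_∞`-distance from a point to a set. -/
def dseqSet (x : ℕ → ℝ≥0) (C : Set (ℕ → ℝ≥0)) : ℝ := sInf (dseq x '' C)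

/-- `A` is bounded away from `C` in the metric `d_∞`. -/
def BddAwaySeq (C A : Set (ℕ → ℝ≥0)) : Prop := ∃ r > 0, ∀ x ∈ A, r ≤ dseqSet x C

/-- The class `C(ℝ₊^∞ \ C)` of test functions: bounded, nonnegative, continuous off `C`,
vanishing at `d_∞`-distance `< r` from `C` for some `r > 0`. -/
def IsCOseq (C : Set (ℕ → ℝ≥0)) (f : (ℕ → ℝ≥0) → ℝ) : Prop :=
  ContinuousOn f Cᶜ ∧ (∀ x, 0 ≤ f x) ∧ (∃ B : ℝ, ∀ x, f x ≤ B) ∧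
    ∃ r > 0, ∀ x, dseqSet x C < r → f x = 0

/-- The class `M(ℝ₊^∞ \ C)`: Borel measures giving no mass to `C` and finite mass to
each region at `d_∞`-distance at least `r > 0` from `C`. -/
def MemMOseq (C : Set (ℕ → ℝ≥0)) (μ : Measure (ℕ → ℝ≥0)) : Prop :=
  μ C = 0 ∧ ∀ r : ℝ, 0 < r → μ {x | r ≤ dseqSet x C} < ⊤

/-- Convergence in `M(ℝ₊^∞ \ C)`. -/
def MOTendstoSeq (C : Set (ℕ → ℝ≥0)) (μn : ℕ → Measure (ℕ → ℝ≥0))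
    (μ : Measure (ℕ → ℝ≥0)) : Prop :=
  ∀ f : (ℕ → ℝ≥0) → ℝ, IsCOseq C f →
    Tendsto (fun n => ∫ x, f x ∂ μn n) atTop (𝓝 (∫ x, f x ∂ μ))

/-- The projection `PROJ_p` onto the first `p` coordinates. -/
def PROJ (p : ℕ) (x : ℕ → ℝ≥0) : Fin p → ℝ≥0 := fun i => x i

/-- The `L¹` metric on `ℝ₊^p`. -/
def dL1 {p : ℕ} (u v : Fin p → ℝ≥0) : ℝ := ∑ i, dist (u i) (v i)

/-- The `L¹`-distance from a point of `ℝ₊^p` to a set. -/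
def dL1Set {p : ℕ} (u : Fin p → ℝ≥0) (A : Set (Fin p → ℝ≥0)) : ℝ := sInf (dL1 u '' A)



def fillp (p : ℕ) (z : Fin p → ℝ≥0) : ℕ → ℝ≥0 := fun n => if h : n < p then z ⟨n, h⟩ else 0

lemma dseq_term_nonneg (x y : ℕ → ℝ≥0) (i : ℕ) :
    0 ≤ (2 : ℝ)⁻¹ ^ (i + 1) * min (dist (x i) (y i)) 1 :=
  mul_nonneg (pow_nonneg (by norm_num) _) (le_min dist_nonneg zero_le_one)

lemma dseq_term_le (x y : ℕ → ℝ≥0) (i : ℕ) :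
    (2 : ℝ)⁻¹ ^ (i + 1) * min (dist (x i) (y i)) 1 ≤ (2 : ℝ)⁻¹ ^ (i + 1) :=
  mul_le_of_le_one_right (pow_nonneg (by norm_num) _) (min_le_right _ _)

lemma summable_geom_half : Summable (fun i : ℕ => (2 : ℝ)⁻¹ ^ (i + 1)) := by
  simpa [pow_succ, mul_comm] using (summable_geometric_of_lt_one (by norm_num) (by norm_num : (2:ℝ)⁻¹ < 1)).mul_left (2:ℝ)⁻¹

lemma summable_dseq (x y : ℕ → ℝ≥0) :
    Summable (fun i : ℕ => (2 : ℝ)⁻¹ ^ (i + 1) * min (dist (x i) (y i)) 1) :=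
  Summable.of_nonneg_of_le (dseq_term_nonneg x y) (dseq_term_le x y) summable_geom_half

lemma tsum_geom_half : (∑' i : ℕ, (2 : ℝ)⁻¹ ^ (i + 1)) = 1 := by
  have : (∑' i : ℕ, (2 : ℝ)⁻¹ ^ i) = 2 := by
    rw [tsum_geometric_of_lt_one (by norm_num) (by norm_num : (2:ℝ)⁻¹ < 1)]; norm_num
  calc (∑' i : ℕ, (2 : ℝ)⁻¹ ^ (i + 1)) = ∑' i : ℕ, (2:ℝ)⁻¹ * (2:ℝ)⁻¹ ^ i := by
        simp [pow_succ, mul_comm]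
    _ = (2:ℝ)⁻¹ * ∑' i : ℕ, (2:ℝ)⁻¹ ^ i := tsum_mul_left
    _ = 1 := by rw [this]; norm_num

lemma dseq_nonneg (x y : ℕ → ℝ≥0) : 0 ≤ dseq x y :=
  tsum_nonneg (dseq_term_nonneg x y)

lemma dseq_self (x : ℕ → ℝ≥0) : dseq x x = 0 := by
  simp [dseq]

lemma dseq_comm (x y : ℕ → ℝ≥0) : dseq x y = dseq y x := by
  unfold dseq; congr 1; funext i; rw [dist_comm]

lemma dseq_triangle (x y z : ℕ → ℝ≥0) : dseq x z ≤ dseq x y + dseq y z := by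
  unfold dseq
  rw [← Summable.tsum_add (summable_dseq x y) (summable_dseq y z)]
  refine Summable.tsum_le_tsum (fun i => ?_) (summable_dseq x z)
    ((summable_dseq x y).add (summable_dseq y z))
  rw [← mul_add]
  refine mul_le_mul_of_nonneg_left ?_ (pow_nonneg (by norm_num) _)
  rcases le_total 1 (dist (x i) (y i)) with h | h
  · have : min (dist (x i) (z i)) 1 ≤ 1 := min_le_right _ _
    have h2 : (0:ℝ) ≤ min (dist (y i) (z i)) 1 := le_min dist_nonneg zero_le_one
    have : min (dist (x i) (y i)) 1 = 1 := min_eq_right h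
    nlinarith [min_le_right (dist (x i) (z i)) 1]
  · rcases le_total 1 (dist (y i) (z i)) with h' | h'
    · have h2 : (0:ℝ) ≤ min (dist (x i) (y i)) 1 := le_min dist_nonneg zero_le_one
      have : min (dist (y i) (z i)) 1 = 1 := min_eq_right h'
      nlinarith [min_le_right (dist (x i) (z i)) 1]
    · rw [min_eq_left h, min_eq_left h']
      exact le_trans (min_le_left _ _) (dist_triangle _ _ _)

lemma term_le_dseq (x y : ℕ → ℝ≥0) (i : ℕ) :
    (2 : ℝ)⁻¹ ^ (i + 1) * min (dist (x i) (y i)) 1 ≤ dseq x y :=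
  Summable.le_tsum (summable_dseq x y) i (fun j _ => dseq_term_nonneg x y j)

lemma PROJ_fillp (p : ℕ) (z : Fin p → ℝ≥0) : PROJ p (fillp p z) = z := by
  funext i; simp [PROJ, fillp, i.isLt]

lemma dL1_nonneg {p : ℕ} (u v : Fin p → ℝ≥0) : 0 ≤ dL1 u v :=
  Finset.sum_nonneg fun i _ => dist_nonneg


lemma dL1_comm {p : ℕ} (u v : Fin p → ℝ≥0) : dL1 u v = dL1 v u := by
  unfold dL1; congr 1; funext i; rw [dist_comm]

lemma dL1_triangle {p : ℕ} (u v w : Fin p → ℝ≥0) : dL1 u w ≤ dL1 u v + dL1 v w := by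
  unfold dL1; rw [← Finset.sum_add_distrib]
  exact Finset.sum_le_sum fun i _ => dist_triangle _ _ _

lemma dseq_le_dL1_add (p : ℕ) (x y : ℕ → ℝ≥0) :
    dseq x y ≤ dL1 (PROJ p x) (PROJ p y) + (2 : ℝ)⁻¹ ^ p := by
  unfold dseq
  rw [← Summable.sum_add_tsum_nat_add p (summable_dseq x y)]
  have h1 : (∑ i ∈ Finset.range p, (2 : ℝ)⁻¹ ^ (i + 1) * min (dist (x i) (y i)) 1)
      ≤ dL1 (PROJ p x) (PROJ p y) := by
    rw [dL1]
    simp only [PROJ]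
    rw [Fin.sum_univ_eq_sum_range (fun i => dist (x i) (y i)) p]
    refine Finset.sum_le_sum fun i _ => ?_
    calc (2 : ℝ)⁻¹ ^ (i + 1) * min (dist (x i) (y i)) 1
        ≤ 1 * min (dist (x i) (y i)) 1 := by
          refine mul_le_mul_of_nonneg_right (pow_le_one₀ (by norm_num) (by norm_num)) ?_
          exact le_min dist_nonneg zero_le_one
      _ ≤ dist (x i) (y i) := by rw [one_mul]; exact min_le_left _ _
  have h2 : (∑' i : ℕ, (2 : ℝ)⁻¹ ^ ((i + p) + 1) * min (dist (x (i + p)) (y (i + p))) 1)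
      ≤ (2 : ℝ)⁻¹ ^ p := by
    have : ∀ i : ℕ, (2 : ℝ)⁻¹ ^ ((i + p) + 1) * min (dist (x (i + p)) (y (i + p))) 1
        ≤ (2 : ℝ)⁻¹ ^ p * (2 : ℝ)⁻¹ ^ (i + 1) := by
      intro i
      have := dseq_term_le x y (i + p)
      calc (2 : ℝ)⁻¹ ^ ((i + p) + 1) * min (dist (x (i + p)) (y (i + p))) 1
          ≤ (2 : ℝ)⁻¹ ^ ((i + p) + 1) := dseq_term_le x y (i + p)
        _ = (2 : ℝ)⁻¹ ^ p * (2 : ℝ)⁻¹ ^ (i + 1) := by ring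
    calc (∑' i : ℕ, (2 : ℝ)⁻¹ ^ ((i + p) + 1) * min (dist (x (i + p)) (y (i + p))) 1)
        ≤ ∑' i : ℕ, (2 : ℝ)⁻¹ ^ p * (2 : ℝ)⁻¹ ^ (i + 1) := by
          refine Summable.tsum_le_tsum this ((_root_.summable_nat_add_iff p).2 (summable_dseq x y))
            (summable_geom_half.mul_left _)
      _ = (2 : ℝ)⁻¹ ^ p * ∑' i : ℕ, (2 : ℝ)⁻¹ ^ (i + 1) := tsum_mul_left
      _ = (2 : ℝ)⁻¹ ^ p := by rw [tsum_geom_half, mul_one]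
  linarith



lemma dL1_self {p : ℕ} (u : Fin p → ℝ≥0) : dL1 u u = 0 := by simp [dL1]

lemma dseq_fillp_self (p : ℕ) (x : ℕ → ℝ≥0) :
    dseq x (fillp p (PROJ p x)) ≤ (2 : ℝ)⁻¹ ^ p := by
  have := dseq_le_dL1_add p x (fillp p (PROJ p x))
  rw [PROJ_fillp] at this
  simpa [dL1_self] using this

lemma dseq_fillp_fillp (p : ℕ) (z w : Fin p → ℝ≥0) :
    dseq (fillp p z) (fillp p w) ≤ dL1 z w := by
  unfold dseq
  rw [← Summable.sum_add_tsum_nat_add p (summable_dseq (fillp p z) (fillp p w))]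
  have h2 : (∑' i : ℕ, (2 : ℝ)⁻¹ ^ ((i + p) + 1) *
      min (dist (fillp p z (i + p)) (fillp p w (i + p))) 1) = 0 := by
    have h3 : ∀ i : ℕ, (2 : ℝ)⁻¹ ^ ((i + p) + 1) *
        min (dist (fillp p z (i + p)) (fillp p w (i + p))) 1 = 0 := by
      intro i
      have : fillp p z (i + p) = fillp p w (i + p) := by
        simp [fillp, Nat.not_lt.2 (Nat.le_add_left p i)]
      simp [this]
    rw [tsum_congr h3, tsum_zero]
  rw [h2, add_zero]
  calc (∑ i ∈ Finset.range p, (2 : ℝ)⁻¹ ^ (i + 1) * min (dist (fillp p z i) (fillp p w i)) 1)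
      ≤ ∑ i ∈ Finset.range p, dist (fillp p z i) (fillp p w i) := by
        refine Finset.sum_le_sum fun i _ => ?_
        calc (2 : ℝ)⁻¹ ^ (i + 1) * min (dist (fillp p z i) (fillp p w i)) 1
            ≤ 1 * min (dist (fillp p z i) (fillp p w i)) 1 :=
              mul_le_mul_of_nonneg_right (pow_le_one₀ (by norm_num) (by norm_num))
                (le_min dist_nonneg zero_le_one)
          _ ≤ dist (fillp p z i) (fillp p w i) := by rw [one_mul]; exact min_le_left _ _
    _ = ∑ i : Fin p, dist (fillp p z ↑i) (fillp p w ↑i) :=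
        (Fin.sum_univ_eq_sum_range (fun i => dist (fillp p z i) (fillp p w i)) p).symm
    _ = dL1 z w := by
        rw [dL1]
        refine Finset.sum_congr rfl fun i _ => ?_
        simp [fillp, i.isLt]

lemma coord_le_dseq (x y : ℕ → ℝ≥0) (i : ℕ) :
    min (dist (x i) (y i)) 1 ≤ 2 ^ (i + 1) * dseq x y := by
  have h := term_le_dseq x y i
  have h2 : ((2:ℝ)⁻¹) ^ (i + 1) * (2:ℝ) ^ (i + 1) = 1 := by
    rw [← mul_pow]; norm_num
  have h3 : min (dist (x i) (y i)) 1
      = 2 ^ (i + 1) * ((2:ℝ)⁻¹ ^ (i + 1) * min (dist (x i) (y i)) 1) := by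
    rw [← mul_assoc, mul_comm ((2:ℝ) ^ (i + 1)), h2, one_mul]
  rw [h3]
  exact mul_le_mul_of_nonneg_left h (by positivity)

lemma dL1_le_of_dseq_lt {p : ℕ} {x y : ℕ → ℝ≥0} (h : dseq x y < (2 : ℝ)⁻¹ ^ p) :
    dL1 (PROJ p x) (PROJ p y) ≤ 2 ^ (p + 1) * dseq x y := by
  have hd0 := dseq_nonneg x y
  have key : ∀ i : Fin p, dist (x ↑i) (y ↑i) ≤ 2 ^ ((i : ℕ) + 1) * dseq x y := by
    intro i
    have hc := coord_le_dseq x y i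
    have hlt : (2:ℝ) ^ ((i : ℕ) + 1) * dseq x y < 1 := by
      have h1 : (2:ℝ) ^ ((i : ℕ) + 1) ≤ 2 ^ p := by
        apply pow_le_pow_right₀ (by norm_num)
        exact i.isLt
      have h2 : (2:ℝ) ^ p * dseq x y < 2 ^ p * (2:ℝ)⁻¹ ^ p := by
        exact mul_lt_mul_of_pos_left h (by positivity)
      have h3 : (2:ℝ) ^ p * (2:ℝ)⁻¹ ^ p = 1 := by rw [← mul_pow]; norm_num
      nlinarith
    rcases le_total (dist (x ↑i) (y ↑i)) 1 with hle | hle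
    · rwa [min_eq_left hle] at hc
    · exfalso
      rw [min_eq_right hle] at hc
      linarith
  calc dL1 (PROJ p x) (PROJ p y) = ∑ i : Fin p, dist (x ↑i) (y ↑i) := by rfl
    _ ≤ ∑ i : Fin p, 2 ^ ((i : ℕ) + 1) * dseq x y := Finset.sum_le_sum fun i _ => key i
    _ = (∑ i ∈ Finset.range p, (2:ℝ) ^ (i + 1)) * dseq x y := by
        rw [Finset.sum_mul, Fin.sum_univ_eq_sum_range (fun i => (2:ℝ) ^ (i+1) * dseq x y) p]
    _ ≤ 2 ^ (p + 1) * dseq x y := by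
        refine mul_le_mul_of_nonneg_right ?_ hd0
        have : (∑ i ∈ Finset.range p, (2:ℝ) ^ (i + 1)) = 2 * ∑ i ∈ Finset.range p, (2:ℝ) ^ i := by
          rw [Finset.mul_sum]; exact Finset.sum_congr rfl fun i _ => by ring
        rw [this, geom_sum_eq (by norm_num : (2:ℝ) ≠ 1) p]
        have : (0:ℝ) ≤ 2 ^ p := by positivity
        rw [pow_succ]
        nlinarith



lemma bddBelow_dseq_image (x : ℕ → ℝ≥0) (C : Set (ℕ → ℝ≥0)) : BddBelow (dseq x '' C) :=
  ⟨0, fun _ ⟨y, _, hy⟩ => hy ▸ dseq_nonneg x y⟩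

lemma dseqSet_nonneg (x : ℕ → ℝ≥0) (C : Set (ℕ → ℝ≥0)) : 0 ≤ dseqSet x C :=
  Real.sInf_nonneg fun _ ⟨y, _, hy⟩ => hy ▸ dseq_nonneg x y

lemma dseqSet_le {x y : ℕ → ℝ≥0} {C : Set (ℕ → ℝ≥0)} (hy : y ∈ C) : dseqSet x C ≤ dseq x y :=
  csInf_le (bddBelow_dseq_image x C) ⟨y, hy, rfl⟩

lemma exists_of_dseqSet_lt {x : ℕ → ℝ≥0} {C : Set (ℕ → ℝ≥0)} {r : ℝ} (hC : C.Nonempty)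
    (h : dseqSet x C < r) : ∃ y ∈ C, dseq x y < r := by
  obtain ⟨_, ⟨y, hy, rfl⟩, hlt⟩ := exists_lt_of_csInf_lt (hC.image _) h
  exact ⟨y, hy, hlt⟩

lemma le_dseqSet {x : ℕ → ℝ≥0} {C : Set (ℕ → ℝ≥0)} {c : ℝ} (hC : C.Nonempty)
    (h : ∀ y ∈ C, c ≤ dseq x y) : c ≤ dseqSet x C :=
  le_csInf (hC.image _) fun _ ⟨y, hy, hb⟩ => hb ▸ h y hy

lemma dseqSet_eq_zero_of_mem {x : ℕ → ℝ≥0} {C : Set (ℕ → ℝ≥0)} (hx : x ∈ C) :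
    dseqSet x C = 0 :=
  le_antisymm (by simpa [dseq_self] using dseqSet_le (x := x) hx) (dseqSet_nonneg x C)

lemma dseqSet_triangle (x y : ℕ → ℝ≥0) {C : Set (ℕ → ℝ≥0)} (hC : C.Nonempty) :
    dseqSet x C ≤ dseq x y + dseqSet y C := by
  have : dseqSet x C - dseq x y ≤ dseqSet y C := by
    refine le_dseqSet hC fun z hz => ?_
    have h1 : dseqSet x C ≤ dseq x z := dseqSet_le hz
    have h2 : dseq x z ≤ dseq x y + dseq y z := dseq_triangle x y z
    linarith
  linarith

lemma abs_dseqSet_sub_le (x y : ℕ → ℝ≥0) {C : Set (ℕ → ℝ≥0)} (hC : C.Nonempty) :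
    |dseqSet x C - dseqSet y C| ≤ dseq x y := by
  rw [abs_le]
  constructor
  · have := dseqSet_triangle y x hC
    rw [dseq_comm y x] at this
    linarith
  · have := dseqSet_triangle x y hC
    linarith

lemma continuous_dseq_right (y : ℕ → ℝ≥0) : Continuous fun x => dseq x y := by
  refine continuous_tsum (f := fun i (x : ℕ → ℝ≥0) =>
    (2 : ℝ)⁻¹ ^ (i + 1) * min (dist (x i) (y i)) 1) ?_ summable_geom_half ?_
  · intro i
    exact continuous_const.mul (((continuous_apply i).dist continuous_const).min continuous_const)
  · intro i x
    rw [Real.norm_eq_abs, abs_of_nonneg (dseq_term_nonneg x y i)]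
    exact dseq_term_le x y i

lemma continuous_dseqSet {C : Set (ℕ → ℝ≥0)} (hC : C.Nonempty) :
    Continuous fun x => dseqSet x C := by
  rw [continuous_iff_continuousAt]
  intro x₀
  rw [ContinuousAt, tendsto_iff_dist_tendsto_zero]
  have hsq : ∀ x, dist (dseqSet x C) (dseqSet x₀ C) ≤ dseq x x₀ := fun x => by
    rw [Real.dist_eq]; exact abs_dseqSet_sub_le x x₀ hC
  have h := (continuous_dseq_right x₀).tendsto x₀
  rw [dseq_self] at h
  exact squeeze_zero (fun _ => dist_nonneg) hsq h

lemma exists_dseq_lower {A : Set (ℕ → ℝ≥0)} (hA : IsClosed A) {x : ℕ → ℝ≥0} (hx : x ∉ A) :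
    ∃ c > 0, ∀ y ∈ A, c ≤ dseq x y := by
  have hxo : x ∈ Aᶜ := hx
  obtain ⟨I, u, hu, hsub⟩ := isOpen_pi_iff.1 hA.isOpen_compl x hxo
  rcases I.eq_empty_or_nonempty with rfl | hI
  · refine ⟨1, one_pos, fun y hy => absurd hy (hsub (by simp))⟩
  · have hball : ∀ i : ℕ, ∃ e : ℝ, 0 < e ∧ (i ∈ I → Metric.ball (x i) e ⊆ u i) := by
      intro i
      by_cases hi : i ∈ I
      · obtain ⟨e, he, hb⟩ := Metric.isOpen_iff.1 (hu i hi).1 (x i) (hu i hi).2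
        exact ⟨e, he, fun _ => hb⟩
      · exact ⟨1, one_pos, fun h => absurd h hi⟩
    choose e he hb using hball
    set N := I.sup id with hN
    set m := I.inf' hI e with hm
    have hm0 : 0 < m := (Finset.lt_inf'_iff hI).2 fun i _ => he i
    refine ⟨(2 : ℝ)⁻¹ ^ (N + 1) * min m 1, by positivity, fun y hy => ?_⟩
    have hynot : y ∉ (I : Set ℕ).pi u := fun hmem => (hsub hmem) hy
    obtain ⟨i, hiI, hyi⟩ : ∃ i ∈ I, y i ∉ u i := by
      by_contra hcon
      push_neg at hcon
      exact hynot fun i hi => hcon i hi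
    have hdist : e i ≤ dist (x i) (y i) := by
      by_contra hlt
      push_neg at hlt
      exact hyi (hb i hiI (by rwa [Metric.mem_ball, dist_comm]))
    have hmi : m ≤ e i := Finset.inf'_le e hiI
    calc (2 : ℝ)⁻¹ ^ (N + 1) * min m 1
        ≤ (2 : ℝ)⁻¹ ^ (i + 1) * min (dist (x i) (y i)) 1 := by
          refine mul_le_mul ?_ ?_ (le_min hm0.le zero_le_one) (by positivity)
          · exact pow_le_pow_of_le_one (by norm_num) (by norm_num)
              (Nat.succ_le_succ (Finset.le_sup (f := id) hiI))
          · exact min_le_min (le_trans hmi hdist) le_rfl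
      _ ≤ dseq x y := term_le_dseq x y i

lemma mem_of_dseqSet_nonpos {A : Set (ℕ → ℝ≥0)} (hA : IsClosed A) (hne : A.Nonempty)
    {x : ℕ → ℝ≥0} (h : dseqSet x A ≤ 0) : x ∈ A := by
  by_contra hx
  obtain ⟨c, hc, hcl⟩ := exists_dseq_lower hA hx
  have := le_dseqSet hne hcl
  linarith



lemma bddBelow_dL1_image {p : ℕ} (u : Fin p → ℝ≥0) (A : Set (Fin p → ℝ≥0)) :
    BddBelow (dL1 u '' A) := ⟨0, fun _ ⟨v, _, hv⟩ => hv ▸ dL1_nonneg u v⟩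

lemma dL1Set_nonneg {p : ℕ} (u : Fin p → ℝ≥0) (A : Set (Fin p → ℝ≥0)) : 0 ≤ dL1Set u A :=
  Real.sInf_nonneg fun _ ⟨v, _, hv⟩ => hv ▸ dL1_nonneg u v

lemma dL1Set_le {p : ℕ} {u v : Fin p → ℝ≥0} {A : Set (Fin p → ℝ≥0)} (hv : v ∈ A) :
    dL1Set u A ≤ dL1 u v := csInf_le (bddBelow_dL1_image u A) ⟨v, hv, rfl⟩

lemma exists_of_dL1Set_lt {p : ℕ} {u : Fin p → ℝ≥0} {A : Set (Fin p → ℝ≥0)} {r : ℝ}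
    (hA : A.Nonempty) (h : dL1Set u A < r) : ∃ v ∈ A, dL1 u v < r := by
  obtain ⟨_, ⟨v, hv, rfl⟩, hlt⟩ := exists_lt_of_csInf_lt (hA.image _) h
  exact ⟨v, hv, hlt⟩

lemma le_dL1Set {p : ℕ} {u : Fin p → ℝ≥0} {A : Set (Fin p → ℝ≥0)} {c : ℝ}
    (hA : A.Nonempty) (h : ∀ v ∈ A, c ≤ dL1 u v) : c ≤ dL1Set u A :=
  le_csInf (hA.image _) fun _ ⟨v, hv, hb⟩ => hb ▸ h v hv

lemma dL1Set_triangle {p : ℕ} (u v : Fin p → ℝ≥0) {A : Set (Fin p → ℝ≥0)} (hA : A.Nonempty) :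
    dL1Set u A ≤ dL1 u v + dL1Set v A := by
  have : dL1Set u A - dL1 u v ≤ dL1Set v A := by
    refine le_dL1Set hA fun w hw => ?_
    have h1 : dL1Set u A ≤ dL1 u w := dL1Set_le hw
    have h2 : dL1 u w ≤ dL1 u v + dL1 v w := dL1_triangle u v w
    linarith
  linarith

lemma continuous_dL1_right {p : ℕ} (v : Fin p → ℝ≥0) : Continuous fun u => dL1 u v := by
  unfold dL1
  exact continuous_finset_sum _ fun i _ => (continuous_apply i).dist continuous_const

lemma continuous_dL1Set {p : ℕ} {A : Set (Fin p → ℝ≥0)} (hA : A.Nonempty) :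
    Continuous fun u => dL1Set u A := by
  rw [continuous_iff_continuousAt]
  intro u₀
  rw [ContinuousAt, tendsto_iff_dist_tendsto_zero]
  have hsq : ∀ u, dist (dL1Set u A) (dL1Set u₀ A) ≤ dL1 u u₀ := fun u => by
    rw [Real.dist_eq, abs_le]
    constructor
    · have := dL1Set_triangle u₀ u hA
      rw [dL1_comm u₀ u] at this
      linarith
    · have := dL1Set_triangle u u₀ hA
      linarith
  have h := (continuous_dL1_right u₀).tendsto u₀
  rw [dL1_self] at h
  exact squeeze_zero (fun _ => dist_nonneg) hsq h

lemma continuous_PROJ (p : ℕ) : Continuous (PROJ p) :=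
  continuous_pi fun i => continuous_apply (i : ℕ)

lemma continuous_fillp (p : ℕ) : Continuous (fillp p) := by
  refine continuous_pi fun n => ?_
  by_cases h : n < p
  · simpa [fillp, h] using (continuous_apply (⟨n, h⟩ : Fin p))
  · simpa [fillp, h] using continuous_const

lemma exists_pow_half_lt {ε : ℝ} (hε : 0 < ε) : ∃ p : ℕ, 1 ≤ p ∧ (2 : ℝ)⁻¹ ^ p < ε := by
  obtain ⟨n, hn⟩ := exists_pow_lt_of_lt_one hε (by norm_num : (2:ℝ)⁻¹ < 1)
  refine ⟨max 1 n, le_max_left _ _, lt_of_le_of_lt ?_ hn⟩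
  exact pow_le_pow_of_le_one (by norm_num) (by norm_num) (le_max_right _ _)

lemma abs_min_one_sub_min_one (s t : ℝ) : |min 1 s - min 1 t| ≤ |s - t| := by
  rcases le_total s t with h | h <;> rcases le_total 1 s with h1 | h1 <;>
    rcases le_total 1 t with h2 | h2 <;>
    simp [min_eq_left, min_eq_right, h1, h2, abs_le] <;> constructor <;> linarith [abs_nonneg (s - t), le_abs_self (s-t), neg_abs_le (s-t)]

-- measurable instance sanity
example : OpensMeasurableSpace (ℕ → ℝ≥0) := inferInstance
example : BorelSpace (ℕ → ℝ≥0) := inferInstance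

lemma measurableSet_le_dseqSet {C : Set (ℕ → ℝ≥0)} (hC : C.Nonempty) (r : ℝ) :
    MeasurableSet {x | r ≤ dseqSet x C} :=
  (isClosed_le continuous_const (continuous_dseqSet hC)).measurableSet

lemma integrable_of_support_subset {μ : Measure (ℕ → ℝ≥0)} {h : (ℕ → ℝ≥0) → ℝ} {K : ℝ}
    {A : Set (ℕ → ℝ≥0)} (hcont : Continuous h) (h0 : ∀ x, 0 ≤ h x) (hK : ∀ x, h x ≤ K)
    (hsupp : ∀ x, h x ≠ 0 → x ∈ A) (hA : MeasurableSet A) (hAfin : μ A < ⊤) :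
    Integrable h μ := by
  refine ⟨hcont.aestronglyMeasurable, ?_⟩
  rw [hasFiniteIntegral_iff_ofReal (ae_of_all μ h0)]
  calc (∫⁻ x, ENNReal.ofReal (h x) ∂μ) ≤ ∫⁻ x, A.indicator (fun _ => ENNReal.ofReal K) x ∂μ := by
        refine lintegral_mono fun x => ?_
        by_cases hx : h x = 0
        · simp [hx]
        · have hxA := hsupp x hx
          rw [Set.indicator_of_mem hxA]
          exact ENNReal.ofReal_le_ofReal (hK x)
    _ = ENNReal.ofReal K * μ A := by rw [lintegral_indicator hA]; simp [mul_comm]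
    _ < ⊤ := ENNReal.mul_lt_top ENNReal.ofReal_lt_top hAfin

lemma lintegral_ofReal_le_indicator {μ : Measure (ℕ → ℝ≥0)} {h : (ℕ → ℝ≥0) → ℝ}
    {A : Set (ℕ → ℝ≥0)} (hK : ∀ x, h x ≤ 1) (hsupp : ∀ x, h x ≠ 0 → x ∈ A)
    (hA : MeasurableSet A) : (∫⁻ x, ENNReal.ofReal (h x) ∂μ) ≤ μ A := by
  calc (∫⁻ x, ENNReal.ofReal (h x) ∂μ) ≤ ∫⁻ x, A.indicator 1 x ∂μ := by
        refine lintegral_mono fun x => ?_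
        by_cases hx : h x = 0
        · simp [hx]
        · have hxA := hsupp x hx
          rw [Set.indicator_of_mem hxA]
          simpa using ENNReal.ofReal_le_ofReal (hK x)
    _ = μ A := lintegral_indicator_one hA

lemma measure_le_lintegral_ofReal {μ : Measure (ℕ → ℝ≥0)} {h : (ℕ → ℝ≥0) → ℝ}
    {F : Set (ℕ → ℝ≥0)} (hF : MeasurableSet F) (h1 : ∀ x ∈ F, 1 ≤ h x) :
    μ F ≤ ∫⁻ x, ENNReal.ofReal (h x) ∂μ := by
  calc μ F = ∫⁻ x, F.indicator 1 x ∂μ := (lintegral_indicator_one hF).symm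
    _ ≤ ∫⁻ x, ENNReal.ofReal (h x) ∂μ := by
        refine lintegral_mono fun x => ?_
        by_cases hx : x ∈ F
        · rw [Set.indicator_of_mem hx]
          simpa using ENNReal.one_le_ofReal.2 (h1 x hx)
        · simp [hx]


def FDconv (C : Set (ℕ → ℝ≥0)) (μ0 : Measure (ℕ → ℝ≥0)) (μn : ℕ → Measure (ℕ → ℝ≥0)) : Prop :=
  ∀ p : ℕ, 1 ≤ p → ((PROJ p '' C)ᶜ : Set (Fin p → ℝ≥0)).Nonempty →
    ∀ g : (Fin p → ℝ≥0) → ℝ, ContinuousOn g (PROJ p '' C)ᶜ →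
      (∀ u, 0 ≤ g u) → (∃ B : ℝ, ∀ u, g u ≤ B) →
      (∃ r > 0, ∀ u, dL1Set u (PROJ p '' C) < r → g u = 0) →
      Tendsto (fun n => ∫ x, g (PROJ p x) ∂ μn n) atTop (𝓝 (∫ x, g (PROJ p x) ∂ μ0))

lemma dseqSet_lower_of_dL1Set {C : Set (ℕ → ℝ≥0)} (hne : C.Nonempty) {p : ℕ} {a : ℝ}
    {x : ℕ → ℝ≥0} (h : a ≤ dL1Set (PROJ p x) (PROJ p '' C)) :
    min ((2:ℝ)⁻¹ ^ p) ((2:ℝ)⁻¹ ^ (p+1) * a) ≤ dseqSet x C := by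
  refine le_dseqSet hne fun y hy => ?_
  by_contra hlt
  push_neg at hlt
  have h1 : dseq x y < (2:ℝ)⁻¹ ^ p := lt_of_lt_of_le hlt (min_le_left _ _)
  have h2 := dL1_le_of_dseq_lt h1
  have h3 : dL1 (PROJ p x) (PROJ p y) < a := by
    have h5 : dseq x y < (2:ℝ)⁻¹ ^ (p+1) * a := lt_of_lt_of_le hlt (min_le_right _ _)
    have h6 : (2:ℝ) ^ (p+1) * dseq x y < (2:ℝ) ^ (p+1) * ((2:ℝ)⁻¹ ^ (p+1) * a) :=
      mul_lt_mul_of_pos_left h5 (by positivity)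
    have h7 : (2:ℝ) ^ (p+1) * ((2:ℝ)⁻¹ ^ (p+1) * a) = a := by
      rw [← mul_assoc, ← mul_pow]; norm_num
    linarith
  have h4 : dL1Set (PROJ p x) (PROJ p '' C) < a :=
    lt_of_le_of_lt (dL1Set_le (Set.mem_image_of_mem _ hy)) h3
  linarith

lemma PROJ_not_mem {C : Set (ℕ → ℝ≥0)} {x₀ : ℕ → ℝ≥0} {ρ : ℝ} {p : ℕ}
    (h2p : (2:ℝ)⁻¹ ^ p < ρ) (hx₀ : ρ ≤ dseqSet x₀ C) : PROJ p x₀ ∉ PROJ p '' C := by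
  rintro ⟨y, hy, hpy⟩
  have h1 : dseq x₀ y ≤ dL1 (PROJ p x₀) (PROJ p y) + (2:ℝ)⁻¹ ^ p := dseq_le_dL1_add p x₀ y
  rw [hpy, dL1_self] at h1
  have h2 : dseqSet x₀ C ≤ dseq x₀ y := dseqSet_le hy
  linarith

lemma dseqSet_lower_of_close {C : Set (ℕ → ℝ≥0)} (hne : C.Nonempty) {x w : ℕ → ℝ≥0}
    {t ρ : ℝ} (h : dseq x w ≤ t) (hw : ρ ≤ dseqSet w C) : ρ - t ≤ dseqSet x C := by
  have h2 := dseqSet_triangle w x hne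
  rw [dseq_comm w x] at h2
  linarith

lemma stepU {C : Set (ℕ → ℝ≥0)} {μ0 : Measure (ℕ → ℝ≥0)} {μn : ℕ → Measure (ℕ → ℝ≥0)}
    (hne : C.Nonempty) (hμ0 : MemMOseq C μ0) (hμn : ∀ n, MemMOseq C (μn n))
    (H : FDconv C μ0 μn) {ρ : ℝ} (hρ : 0 < ρ) :
    ∃ M : ℝ≥0∞, M ≠ ⊤ ∧ μ0 {x | ρ ≤ dseqSet x C} ≤ M ∧
      ∀ n, μn n {x | ρ ≤ dseqSet x C} ≤ M := by
  rcases eq_empty_or_nonempty {x | ρ ≤ dseqSet x C} with he | ⟨x₀, hx₀⟩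
  · exact ⟨0, by simp, by simp [he], fun n => by simp [he]⟩
  have hx₀' : ρ ≤ dseqSet x₀ C := hx₀
  obtain ⟨p, hp1, hp2⟩ := exists_pow_half_lt (show (0:ℝ) < ρ/4 by linarith)
  have hPC : (PROJ p '' C).Nonempty := hne.image _
  set g : (Fin p → ℝ≥0) → ℝ :=
    fun z => min 1 (max 0 ((4/ρ) * dL1Set z (PROJ p '' C) - 1)) with hgdef
  have hgc : Continuous g :=
    continuous_const.min (continuous_const.max
      ((continuous_const.mul (continuous_dL1Set hPC)).sub continuous_const))
  have hg0 : ∀ u, 0 ≤ g u := fun u => le_min zero_le_one (le_max_left 0 _)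
  have hg1 : ∀ u, g u ≤ 1 := fun u => min_le_left _ _
  have hgv : ∀ u, dL1Set u (PROJ p '' C) < ρ/4 → g u = 0 := by
    intro u hu
    have : (4/ρ) * dL1Set u (PROJ p '' C) - 1 ≤ 0 := by
      have h1 : (4/ρ) * dL1Set u (PROJ p '' C) < (4/ρ) * (ρ/4) :=
        mul_lt_mul_of_pos_left hu (by positivity)
      have : (4/ρ) * (ρ/4) = 1 := by field_simp
      linarith
    simp only [hgdef]
    rw [max_eq_left this, min_eq_right zero_le_one]
  set h : (ℕ → ℝ≥0) → ℝ := fun x => g (PROJ p x) with hhdef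
  have hh1 : ∀ x ∈ {x | ρ ≤ dseqSet x C}, 1 ≤ h x := by
    intro x hx
    have hge : ρ/2 ≤ dL1Set (PROJ p x) (PROJ p '' C) := by
      by_contra hb
      push_neg at hb
      obtain ⟨w, ⟨y, hy, rfl⟩, hlt⟩ := exists_of_dL1Set_lt hPC hb
      have h1 : dseq x y ≤ dL1 (PROJ p x) (PROJ p y) + (2:ℝ)⁻¹ ^ p := dseq_le_dL1_add p x y
      have h2 : dseqSet x C ≤ dseq x y := dseqSet_le hy
      have hx' : ρ ≤ dseqSet x C := hx
      linarith
    have hge2 : 1 ≤ (4/ρ) * dL1Set (PROJ p x) (PROJ p '' C) - 1 := by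
      have h1 : (4/ρ) * (ρ/2) ≤ (4/ρ) * dL1Set (PROJ p x) (PROJ p '' C) :=
        mul_le_mul_of_nonneg_left hge (by positivity)
      have : (4/ρ) * (ρ/2) = 2 := by field_simp; ring
      linarith
    simp only [hhdef, hgdef]
    rw [max_eq_right (by linarith), min_eq_left (by linarith)]
  set c : ℝ := min ((2:ℝ)⁻¹ ^ p) ((2:ℝ)⁻¹ ^ (p+1) * (ρ/4)) with hcdef
  have hc : 0 < c := lt_min (by positivity) (by positivity)
  have hsupp : ∀ x, h x ≠ 0 → x ∈ {x | c ≤ dseqSet x C} := by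
    intro x hx
    have : ρ/4 ≤ dL1Set (PROJ p x) (PROJ p '' C) := by
      by_contra hb
      push_neg at hb
      exact hx (hgv _ hb)
    exact dseqSet_lower_of_dL1Set hne this
  have hAc : MeasurableSet {x | c ≤ dseqSet x C} := measurableSet_le_dseqSet hne c
  have hAρ : MeasurableSet {x | ρ ≤ dseqSet x C} := measurableSet_le_dseqSet hne ρ
  have hint : ∀ ν : Measure (ℕ → ℝ≥0), MemMOseq C ν → Integrable h ν := fun ν hν =>
    integrable_of_support_subset (hgc.comp (continuous_PROJ p)) (fun x => hg0 _)
      (fun x => hg1 _) hsupp hAc (hν.2 c hc)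
  have hT := H p hp1 ⟨PROJ p x₀, PROJ_not_mem (lt_of_lt_of_le hp2 (by linarith)) hx₀'⟩
    g hgc.continuousOn hg0 ⟨1, hg1⟩ ⟨ρ/4, by positivity, hgv⟩
  obtain ⟨Mr, hMr⟩ := hT.bddAbove_range
  have hMr' : ∀ n, (∫ x, h x ∂ μn n) ≤ Mr := fun n => hMr (Set.mem_range_self n)
  refine ⟨ENNReal.ofReal (max Mr (∫ x, h x ∂ μ0)), ENNReal.ofReal_ne_top, ?_, ?_⟩
  · calc μ0 {x | ρ ≤ dseqSet x C} ≤ ∫⁻ x, ENNReal.ofReal (h x) ∂ μ0 :=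
        measure_le_lintegral_ofReal hAρ hh1
      _ = ENNReal.ofReal (∫ x, h x ∂ μ0) :=
        (ofReal_integral_eq_lintegral_ofReal (hint μ0 hμ0) (ae_of_all _ fun x => hg0 _)).symm
      _ ≤ _ := ENNReal.ofReal_le_ofReal (le_max_right _ _)
  · intro n
    calc μn n {x | ρ ≤ dseqSet x C} ≤ ∫⁻ x, ENNReal.ofReal (h x) ∂ μn n :=
        measure_le_lintegral_ofReal hAρ hh1
      _ = ENNReal.ofReal (∫ x, h x ∂ μn n) :=
        (ofReal_integral_eq_lintegral_ofReal (hint _ (hμn n)) (ae_of_all _ fun x => hg0 _)).symm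
      _ ≤ _ := ENNReal.ofReal_le_ofReal (le_trans (hMr' n) (le_max_left _ _))


lemma stepA {C : Set (ℕ → ℝ≥0)} {μ0 : Measure (ℕ → ℝ≥0)} {μn : ℕ → Measure (ℕ → ℝ≥0)}
    (hne : C.Nonempty) (hCz : ∀ p : ℕ, 1 ≤ p → ∀ z ∈ PROJ p '' C, fillp p z ∈ C)
    (hμ0 : MemMOseq C μ0) (hμn : ∀ n, MemMOseq C (μn n)) (H : FDconv C μ0 μn)
    {F : Set (ℕ → ℝ≥0)} (hFc : IsClosed F) {ρ : ℝ} (hρ : 0 < ρ)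
    (hF : ∀ x ∈ F, ρ ≤ dseqSet x C) :
    limsup (fun n => μn n F) atTop ≤ μ0 F := by
  rcases F.eq_empty_or_nonempty with rfl | hFne
  · simp
  obtain ⟨x₀, hx₀⟩ := hFne
  have hFne : F.Nonempty := ⟨x₀, hx₀⟩
  have main : ∀ η : ℝ, 0 < η → η ≤ ρ/4 →
      limsup (fun n => μn n F) atTop ≤ μ0 {x | dseqSet x F < η} := by
    intro η hη hηρ
    obtain ⟨p, hp1, hp2⟩ := exists_pow_half_lt (show (0:ℝ) < η/2 by linarith)
    have hPF : (PROJ p '' F).Nonempty := ⟨PROJ p x₀, Set.mem_image_of_mem _ hx₀⟩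
    have hδ : (0:ℝ) < η/2 := by linarith
    set g : (Fin p → ℝ≥0) → ℝ :=
      fun z => max 0 (1 - dL1Set z (PROJ p '' F) / (η/2)) with hgdef
    have hgc : Continuous g := continuous_const.max
      (continuous_const.sub ((continuous_dL1Set hPF).div_const (η/2)))
    have hg0 : ∀ u, 0 ≤ g u := fun u => le_max_left 0 _
    have hg1 : ∀ u, g u ≤ 1 := fun u => by
      apply max_le zero_le_one
      have h1 : 0 ≤ dL1Set u (PROJ p '' F) / (η/2) :=
        div_nonneg (dL1Set_nonneg _ _) hδ.le
      linarith
    have hgv : ∀ u, dL1Set u (PROJ p '' C) < ρ/4 → g u = 0 := by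
      intro u hu
      have hge : η/2 ≤ dL1Set u (PROJ p '' F) := by
        refine le_dL1Set hPF ?_
        rintro v ⟨w, hw, rfl⟩
        by_contra hb
        push_neg at hb
        obtain ⟨v', ⟨y, hy, rfl⟩, hdy⟩ := exists_of_dL1Set_lt (hne.image _) hu
        have hmem : fillp p (PROJ p y) ∈ C := hCz p hp1 _ (Set.mem_image_of_mem _ hy)
        have h1 : dseq w (fillp p (PROJ p y))
            ≤ dL1 (PROJ p w) (PROJ p (fillp p (PROJ p y))) + (2:ℝ)⁻¹ ^ p :=
          dseq_le_dL1_add p _ _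
        rw [PROJ_fillp] at h1
        have h2 : dL1 (PROJ p w) (PROJ p y) ≤ dL1 (PROJ p w) u + dL1 u (PROJ p y) :=
          dL1_triangle _ _ _
        rw [dL1_comm (PROJ p w) u] at h2
        have h3 : dseqSet w C ≤ dseq w (fillp p (PROJ p y)) := dseqSet_le hmem
        have h4 := hF w hw
        linarith
      have : 1 - dL1Set u (PROJ p '' F) / (η/2) ≤ 0 := by
        have := (one_le_div hδ).2 hge
        linarith
      simp only [hgdef]
      rw [max_eq_left this]
    set h : (ℕ → ℝ≥0) → ℝ := fun x => g (PROJ p x) with hhdef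
    have hh1 : ∀ x ∈ F, 1 ≤ h x := by
      intro x hx
      have h0 : dL1Set (PROJ p x) (PROJ p '' F) = 0 :=
        le_antisymm (by simpa [dL1_self] using dL1Set_le (u := PROJ p x) (Set.mem_image_of_mem (PROJ p) hx))
          (dL1Set_nonneg _ _)
      simp only [hhdef, hgdef, h0]
      rw [zero_div, sub_zero, max_eq_right zero_le_one]
    have hsupp : ∀ x, h x ≠ 0 →
        dseqSet x F < η ∧ ρ - η ≤ dseqSet x C := by
      intro x hx
      have hlt : dL1Set (PROJ p x) (PROJ p '' F) < η/2 := by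
        by_contra hb
        push_neg at hb
        apply hx
        have : 1 - dL1Set (PROJ p x) (PROJ p '' F) / (η/2) ≤ 0 := by
          have := (one_le_div hδ).2 hb
          linarith
        simp only [hhdef, hgdef]
        rw [max_eq_left this]
      obtain ⟨v, ⟨w, hw, rfl⟩, hdw⟩ := exists_of_dL1Set_lt hPF hlt
      have h1 : dseq x w ≤ dL1 (PROJ p x) (PROJ p w) + (2:ℝ)⁻¹ ^ p := dseq_le_dL1_add p _ _
      have h2 : dseq x w < η := by linarith
      constructor
      · exact lt_of_le_of_lt (dseqSet_le hw) h2
      · exact dseqSet_lower_of_close hne h2.le (hF w hw)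
    have hA : MeasurableSet {x | ρ - η ≤ dseqSet x C} := measurableSet_le_dseqSet hne _
    have hAfin : ∀ ν : Measure (ℕ → ℝ≥0), MemMOseq C ν → ν {x | ρ - η ≤ dseqSet x C} < ⊤ :=
      fun ν hν => hν.2 _ (by linarith)
    have hint : ∀ ν : Measure (ℕ → ℝ≥0), MemMOseq C ν → Integrable h ν := fun ν hν =>
      integrable_of_support_subset (hgc.comp (continuous_PROJ p)) (fun x => hg0 _)
        (fun x => hg1 _) (fun x hx => (hsupp x hx).2) hA (hAfin ν hν)
    have hT := H p hp1 ⟨PROJ p x₀, PROJ_not_mem (by linarith) (hF x₀ hx₀)⟩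
      g hgc.continuousOn hg0 ⟨1, hg1⟩ ⟨ρ/4, by linarith, hgv⟩
    have hTmeas : MeasurableSet {x | dseqSet x F < η} := by
      have : IsOpen {x | dseqSet x F < η} :=
        isOpen_lt (continuous_dseqSet hFne) continuous_const
      exact this.measurableSet
    calc limsup (fun n => μn n F) atTop
        ≤ limsup (fun n => ENNReal.ofReal (∫ x, h x ∂ μn n)) atTop := by
          refine limsup_le_limsup (Eventually.of_forall fun n => ?_)
          calc μn n F ≤ ∫⁻ x, ENNReal.ofReal (h x) ∂ μn n :=
              measure_le_lintegral_ofReal hFc.measurableSet hh1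
            _ = ENNReal.ofReal (∫ x, h x ∂ μn n) :=
              (ofReal_integral_eq_lintegral_ofReal (hint _ (hμn n))
                (ae_of_all _ fun x => hg0 _)).symm
      _ = ENNReal.ofReal (∫ x, h x ∂ μ0) :=
          ((ENNReal.continuous_ofReal.tendsto _).comp hT).limsup_eq
      _ = ∫⁻ x, ENNReal.ofReal (h x) ∂ μ0 :=
          ofReal_integral_eq_lintegral_ofReal (hint _ hμ0) (ae_of_all _ fun x => hg0 _)
      _ ≤ μ0 {x | dseqSet x F < η} :=
          lintegral_ofReal_le_indicator (fun x => hg1 _)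
            (fun x hx => (hsupp x hx).1) hTmeas
  set s : ℕ → Set (ℕ → ℝ≥0) := fun k => {x | dseqSet x F < min (ρ/4) (1/(k+1 : ℝ))} with hsdef
  have hη : ∀ k : ℕ, 0 < min (ρ/4) (1/(k+1 : ℝ)) := fun k => lt_min (by linarith) (by positivity)
  have hsub : ∀ k, s k ⊆ {x | 3*ρ/4 ≤ dseqSet x C} := by
    intro k x hx
    have hx' : dseqSet x F < ρ/4 := lt_of_lt_of_le hx (min_le_left _ _)
    obtain ⟨w, hw, hdw⟩ := exists_of_dseqSet_lt hFne hx'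
    have := dseqSet_lower_of_close hne hdw.le (hF w hw)
    have : ρ - ρ/4 ≤ dseqSet x C := by linarith
    simpa [Set.mem_setOf_eq] using by linarith
  have hmeas : ∀ k, NullMeasurableSet (s k) μ0 := by
    intro k
    exact ((isOpen_lt (continuous_dseqSet hFne) continuous_const).measurableSet).nullMeasurableSet
  have hanti : Antitone s := by
    intro k l hkl x hx
    simp only [hsdef, Set.mem_setOf_eq] at hx ⊢
    refine lt_of_lt_of_le hx (le_min (min_le_left _ _) ?_)
    refine le_trans (min_le_right _ _) ?_
    apply one_div_le_one_div_of_le (by positivity)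
    exact_mod_cast Nat.succ_le_succ hkl
  have hfin : ∃ k, μ0 (s k) ≠ ⊤ := by
    refine ⟨0, ?_⟩
    exact ne_top_of_le_ne_top (LT.lt.ne_top (hμ0.2 _ (by linarith))) (measure_mono (hsub 0))
  have hInter : (⋂ k, s k) ⊆ F := by
    intro x hx
    refine mem_of_dseqSet_nonpos hFc hFne ?_
    by_contra hb
    push_neg at hb
    obtain ⟨k, hk⟩ := exists_nat_one_div_lt hb
    have hxk := Set.mem_iInter.1 hx k
    have : dseqSet x F < 1/(k+1 : ℝ) := lt_of_lt_of_le hxk (min_le_right _ _)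
    linarith
  have hTend := tendsto_measure_iInter_atTop hmeas hanti hfin
  have hle : ∀ k, limsup (fun n => μn n F) atTop ≤ (μ0 ∘ s) k := fun k =>
    main _ (hη k) (min_le_left _ _)
  exact le_trans (ge_of_tendsto' hTend hle ) (measure_mono hInter)


lemma stepB {C : Set (ℕ → ℝ≥0)} {μ0 : Measure (ℕ → ℝ≥0)} {μn : ℕ → Measure (ℕ → ℝ≥0)}
    (hne : C.Nonempty) (hCz : ∀ p : ℕ, 1 ≤ p → ∀ z ∈ PROJ p '' C, fillp p z ∈ C)
    (hμ0 : MemMOseq C μ0) (hμn : ∀ n, MemMOseq C (μn n)) (H : FDconv C μ0 μn)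
    {G : Set (ℕ → ℝ≥0)} (hGo : IsOpen G) {ρ : ℝ} (hρ : 0 < ρ)
    (hG : ∀ x ∈ G, ρ ≤ dseqSet x C) :
    μ0 G ≤ liminf (fun n => μn n G) atTop := by
  rcases G.eq_empty_or_nonempty with rfl | ⟨x₀, hx₀⟩
  · simp
  obtain ⟨c0, hc0⟩ := hne
  have hne : C.Nonempty := ⟨c0, hc0⟩
  have hc0G : c0 ∉ G := fun h => by
    have h1 := hG c0 h
    rw [dseqSet_eq_zero_of_mem hc0] at h1
    linarith
  have hGcne : Gᶜ.Nonempty := ⟨c0, hc0G⟩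
  have hGc : IsClosed Gᶜ := hGo.isClosed_compl
  obtain ⟨M, hMt, hM0, hMn⟩ := stepU hne hμ0 hμn H (show (0:ℝ) < ρ/2 by linarith)
  set A := {x | ρ/2 ≤ dseqSet x C} with hAdef
  have hAmeas : MeasurableSet A := measurableSet_le_dseqSet hne _
  have hAfin : ∀ ν : Measure (ℕ → ℝ≥0), ν A ≤ M → ν A < ⊤ :=
    fun ν hν => lt_of_le_of_lt hν (lt_top_iff_ne_top.2 hMt)
  set Mr := M.toReal with hMrdef
  have hMr0 : 0 ≤ Mr := ENNReal.toReal_nonneg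
  have htoReal : ∀ ν : Measure (ℕ → ℝ≥0), ν A ≤ M → (ν A).toReal ≤ Mr :=
    fun ν hν => ENNReal.toReal_mono hMt hν
  set hm : ℕ → (ℕ → ℝ≥0) → ℝ := fun m x => min 1 ((m+1 : ℝ) * dseqSet x Gᶜ) with hhmdef
  have hmcont : ∀ m, Continuous (hm m) := fun m =>
    continuous_const.min (continuous_const.mul (continuous_dseqSet hGcne))
  have hm0 : ∀ m x, 0 ≤ hm m x := fun m x =>
    le_min zero_le_one (mul_nonneg (by positivity) (dseqSet_nonneg _ _))
  have hm1 : ∀ m x, hm m x ≤ 1 := fun m x => min_le_left _ _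
  have hmG : ∀ m x, hm m x ≠ 0 → x ∈ G := by
    intro m x hx
    by_contra hxG
    have h1 : dseqSet x Gᶜ = 0 := dseqSet_eq_zero_of_mem hxG
    exact hx (by simp [hhmdef, h1])
  have hmA : ∀ m x, hm m x ≠ 0 → x ∈ A := by
    intro m x hx
    have h1 := hG x (hmG m x hx)
    have : ρ/2 ≤ dseqSet x C := by linarith
    exact this
  have hμ0G : μ0 G = ⨆ m, ∫⁻ x, ENNReal.ofReal (hm m x) ∂ μ0 := by
    have hmeas : ∀ m, Measurable fun x => ENNReal.ofReal (hm m x) :=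
      fun m => (hmcont m).measurable.ennreal_ofReal
    have hmono : Monotone fun m => fun x => ENNReal.ofReal (hm m x) := by
      intro m m' hmm x
      apply ENNReal.ofReal_le_ofReal
      refine min_le_min le_rfl (mul_le_mul_of_nonneg_right ?_ (dseqSet_nonneg _ _))
      exact_mod_cast by exact_mod_cast add_le_add_left (Nat.cast_le.2 hmm) 1
    rw [← lintegral_iSup hmeas hmono]
    have hsup : ∀ x, (⨆ m, ENNReal.ofReal (hm m x)) = G.indicator 1 x := by
      intro x
      by_cases hx : x ∈ G
      · rw [Set.indicator_of_mem hx]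
        have hd : 0 < dseqSet x Gᶜ := by
          obtain ⟨c, hcpos, hcl⟩ := exists_dseq_lower hGc (fun hxc => hxc hx)
          exact lt_of_lt_of_le hcpos (le_dseqSet hGcne hcl)
        obtain ⟨k, hk⟩ := exists_nat_one_div_lt hd
        apply le_antisymm
        · exact iSup_le fun m => by simpa using ENNReal.ofReal_le_ofReal (hm1 m x)
        · refine le_trans ?_ (le_iSup _ k)
          have h1 : hm k x = 1 := by
            have h2 : 1 ≤ (k+1 : ℝ) * dseqSet x Gᶜ := by
              rw [div_lt_iff₀ (by positivity)] at hk
              linarith [mul_comm (dseqSet x Gᶜ) (k+1:ℝ)]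
            simp [hhmdef, min_eq_left h2]
          rw [h1]
          simp
      · rw [Set.indicator_of_notMem hx]
        have h1 : dseqSet x Gᶜ = 0 := dseqSet_eq_zero_of_mem hx
        simp [hhmdef, h1]
    calc μ0 G = ∫⁻ x, G.indicator 1 x ∂ μ0 := (lintegral_indicator_one hGo.measurableSet).symm
      _ = _ := by
          refine lintegral_congr fun x => ?_
          rw [hsup x]
  rw [hμ0G]
  refine iSup_le fun m => ?_
  -- fixed m
  have hint_hm : ∀ ν : Measure (ℕ → ℝ≥0), ν A < ⊤ → Integrable (hm m) ν := fun ν hν =>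
    integrable_of_support_subset (hmcont m) (hm0 m) (hm1 m) (hmA m) hAmeas hν
  obtain ⟨p₀, hp₀1, hp₀2⟩ := exists_pow_half_lt (show (0:ℝ) < ρ/4 by linarith)
  have key : ∀ p : ℕ, 1 ≤ p → (2:ℝ)⁻¹^p < ρ/4 →
      ENNReal.ofReal ((∫ x, hm m x ∂ μ0) - (2*(m+1:ℝ)*Mr) * (2:ℝ)⁻¹^p)
        ≤ liminf (fun n => μn n G) atTop := by
    intro p hp1 hp2
    set e : ℝ := (m+1 : ℝ) * (2:ℝ)⁻¹^p with hedef
    have he0 : 0 ≤ e := by positivity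
    set g : (Fin p → ℝ≥0) → ℝ :=
      fun z => min 1 ((m+1 : ℝ) * dseqSet (fillp p z) Gᶜ) with hgdef
    have hgc : Continuous g := continuous_const.min
      (continuous_const.mul ((continuous_dseqSet hGcne).comp (continuous_fillp p)))
    have hg0 : ∀ u, 0 ≤ g u := fun u =>
      le_min zero_le_one (mul_nonneg (by positivity) (dseqSet_nonneg _ _))
    have hg1 : ∀ u, g u ≤ 1 := fun u => min_le_left _ _
    have hgv : ∀ u, dL1Set u (PROJ p '' C) < ρ/4 → g u = 0 := by
      intro u hu
      obtain ⟨v, ⟨y, hy, rfl⟩, hdy⟩ := exists_of_dL1Set_lt (hne.image _) hu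
      have hmem : fillp p (PROJ p y) ∈ C := hCz p hp1 _ (Set.mem_image_of_mem _ hy)
      have h1 : dseq (fillp p u) (fillp p (PROJ p y)) ≤ dL1 u (PROJ p y) :=
        dseq_fillp_fillp p _ _
      have h2 : dseqSet (fillp p u) C < ρ :=
        lt_of_le_of_lt (le_trans (dseqSet_le hmem) h1) (by linarith)
      have h3 : fillp p u ∉ G := fun hmem' => absurd (hG _ hmem') (by linarith)
      have h4 : dseqSet (fillp p u) Gᶜ = 0 := dseqSet_eq_zero_of_mem h3
      simp [hgdef, h4]
    set hq : (ℕ → ℝ≥0) → ℝ := fun x => g (PROJ p x) with hhqdef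
    have hqG : ∀ x, hq x ≠ 0 → fillp p (PROJ p x) ∈ G := by
      intro x hx
      by_contra hxG
      have h4 : dseqSet (fillp p (PROJ p x)) Gᶜ = 0 := dseqSet_eq_zero_of_mem hxG
      exact hx (by simp [hhqdef, hgdef, h4])
    have hqA : ∀ x, hq x ≠ 0 → x ∈ A := by
      intro x hx
      have h1 := hG _ (hqG x hx)
      have h2 := dseqSet_lower_of_close hne (dseq_fillp_self p x) h1
      show ρ/2 ≤ dseqSet x C
      linarith
    have hdiff : ∀ x, |hm m x - hq x| ≤ e := by
      intro x
      have h1 : hq x = min 1 ((m+1 : ℝ) * dseqSet (fillp p (PROJ p x)) Gᶜ) := rfl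
      have h2 : hm m x = min 1 ((m+1 : ℝ) * dseqSet x Gᶜ) := rfl
      rw [h1, h2]
      refine le_trans (abs_min_one_sub_min_one _ _) ?_
      rw [← mul_sub, abs_mul, abs_of_nonneg (by positivity : (0:ℝ) ≤ (m+1:ℝ))]
      refine mul_le_mul_of_nonneg_left ?_ (by positivity)
      exact le_trans (abs_dseqSet_sub_le _ _ hGcne) (dseq_fillp_self p x)
    have hsuppU : ∀ x, hm m x - hq x ≠ 0 → x ∈ A := by
      intro x hx
      rcases eq_or_ne (hm m x) 0 with h1 | h1
      · rcases eq_or_ne (hq x) 0 with h2 | h2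
        · exact absurd (by rw [h1, h2, sub_zero]) hx
        · exact hqA x h2
      · exact hmA m x h1
    have hint_hq : ∀ ν : Measure (ℕ → ℝ≥0), ν A < ⊤ → Integrable hq ν := fun ν hν =>
      integrable_of_support_subset (hgc.comp (continuous_PROJ p)) (fun x => hg0 _)
        (fun x => hg1 _) hqA hAmeas hν
    -- integral comparison for any measure ν with ν A ≤ M
    have hcomp : ∀ ν : Measure (ℕ → ℝ≥0), ν A ≤ M →
        (∫ x, hq x ∂ ν) - e * Mr ≤ ∫ x, hm m x ∂ ν ∧
        (∫ x, hm m x ∂ ν) - e * Mr ≤ ∫ x, hq x ∂ ν := by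
      intro ν hν
      have hνfin := hAfin ν hν
      have hind : Integrable (A.indicator fun _ => e) ν :=
        (MeasureTheory.integrableOn_const hνfin.ne).integrable_indicator hAmeas
      have hindval : (∫ x, A.indicator (fun _ => e) x ∂ ν) ≤ e * Mr := by
        rw [MeasureTheory.integral_indicator_const e hAmeas, smul_eq_mul, mul_comm]
        exact mul_le_mul_of_nonneg_left (htoReal ν hν) he0
      constructor
      · have hle : ∀ x, hq x - hm m x ≤ A.indicator (fun _ => e) x := by
          intro x
          rcases eq_or_ne (hm m x - hq x) 0 with h1 | h1
          · have : hq x - hm m x = 0 := by linarith [sub_eq_zero.1 h1]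
            rw [this]
            exact Set.indicator_apply_nonneg fun _ => he0
          · rw [Set.indicator_of_mem (hsuppU x h1)]
            have := hdiff x
            rw [abs_le] at this
            linarith [this.1]
        have := MeasureTheory.integral_mono ((hint_hq ν hνfin).sub (hint_hm ν hνfin)) hind hle
        simp only [Pi.sub_apply] at this
        rw [MeasureTheory.integral_sub (hint_hq ν hνfin) (hint_hm ν hνfin)] at this
        linarith
      · have hle : ∀ x, hm m x - hq x ≤ A.indicator (fun _ => e) x := by
          intro x
          rcases eq_or_ne (hm m x - hq x) 0 with h1 | h1
          · rw [h1]
            exact Set.indicator_apply_nonneg fun _ => he0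
          · rw [Set.indicator_of_mem (hsuppU x h1)]
            have := hdiff x
            rw [abs_le] at this
            linarith [this.2]
        have := MeasureTheory.integral_mono ((hint_hm ν hνfin).sub (hint_hq ν hνfin)) hind hle
        simp only [Pi.sub_apply] at this
        rw [MeasureTheory.integral_sub (hint_hm ν hνfin) (hint_hq ν hνfin)] at this
        linarith
    have hT := H p hp1 ⟨PROJ p x₀, PROJ_not_mem (by linarith) (hG x₀ hx₀)⟩
      g hgc.continuousOn hg0 ⟨1, hg1⟩ ⟨ρ/4, by linarith, hgv⟩
    have hkey2 : ∀ n, ENNReal.ofReal ((∫ x, hq x ∂ μn n) - e * Mr) ≤ μn n G := by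
      intro n
      have h1 : (∫ x, hq x ∂ μn n) - e * Mr ≤ ∫ x, hm m x ∂ μn n := (hcomp _ (hMn n)).1
      refine le_trans (ENNReal.ofReal_le_ofReal h1) ?_
      rw [ofReal_integral_eq_lintegral_ofReal (hint_hm _ (hAfin _ (hMn n)))
        (ae_of_all _ (hm0 m))]
      exact lintegral_ofReal_le_indicator (hm1 m) (hmG m) hGo.measurableSet
    have hTlim : Tendsto (fun n => ENNReal.ofReal ((∫ x, hq x ∂ μn n) - e * Mr)) atTop
        (𝓝 (ENNReal.ofReal ((∫ x, hq x ∂ μ0) - e * Mr))) :=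
      (ENNReal.continuous_ofReal.tendsto _).comp (hT.sub_const (e * Mr))
    have hliminf : ENNReal.ofReal ((∫ x, hq x ∂ μ0) - e * Mr)
        ≤ liminf (fun n => μn n G) atTop := by
      rw [← hTlim.liminf_eq]
      exact liminf_le_liminf (Eventually.of_forall hkey2)
    refine le_trans ?_ hliminf
    apply ENNReal.ofReal_le_ofReal
    have h2 : (∫ x, hm m x ∂ μ0) - e * Mr ≤ ∫ x, hq x ∂ μ0 := (hcomp _ hM0).2
    have : (2*(m+1:ℝ)*Mr) * (2:ℝ)⁻¹^p = 2 * (e * Mr) := by rw [hedef]; ring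
    rw [this]
    linarith
  -- let p → ∞ in key
  have hint0 : Integrable (hm m) μ0 := hint_hm μ0 (hAfin μ0 hM0)
  rw [← ofReal_integral_eq_lintegral_ofReal hint0 (ae_of_all _ (hm0 m))]
  have htend : Tendsto (fun p : ℕ => ENNReal.ofReal
      ((∫ x, hm m x ∂ μ0) - (2*(m+1:ℝ)*Mr) * (2:ℝ)⁻¹^p)) atTop
      (𝓝 (ENNReal.ofReal (∫ x, hm m x ∂ μ0))) := by
    refine (ENNReal.continuous_ofReal.tendsto _).comp ?_
    have h1 : Tendsto (fun p : ℕ => (2*(m+1:ℝ)*Mr) * (2:ℝ)⁻¹^p) atTop (𝓝 0) := by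
      have := tendsto_pow_atTop_nhds_zero_of_lt_one
        (by norm_num : (0:ℝ) ≤ 2⁻¹) (by norm_num : (2:ℝ)⁻¹ < 1)
      simpa using this.const_mul (2*(m+1:ℝ)*Mr)
    simpa using tendsto_const_nhds.sub h1
  refine le_of_tendsto htend ?_
  filter_upwards [eventually_ge_atTop p₀] with p hp
  exact key p (le_trans hp₀1 hp)
    (lt_of_le_of_lt (pow_le_pow_of_le_one (by norm_num) (by norm_num) hp) hp₀2)

/-- Reduction of `M(ℝ₊^∞ \ C)` convergence to finite-dimensional convergence:
if every projection `PROJ_p(C)` is closed and refilling with zeros maps it back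
into `C`, then `μ_n → μ_0` in `M(ℝ₊^∞ \ C)` iff for every `p ≥ 1` with
`ℝ₊^p \ PROJ_p(C) ≠ ∅` the pushforwards under `PROJ_p` converge in
`M(ℝ₊^p \ PROJ_p(C))`. -/
theorem stmt15 (C : Set (ℕ → ℝ≥0)) (hC : IsClosed C)
    (hCp : ∀ p : ℕ, 1 ≤ p → IsClosed (PROJ p '' C))
    (hCz : ∀ p : ℕ, 1 ≤ p → ∀ z ∈ PROJ p '' C,
        (fun n => if h : n < p then z ⟨n, h⟩ else 0) ∈ C)
    (μ0 : Measure (ℕ → ℝ≥0)) (μn : ℕ → Measure (ℕ → ℝ≥0))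
    (hμ0 : MemMOseq C μ0) (hμn : ∀ n, MemMOseq C (μn n)) :
    MOTendstoSeq C μn μ0 ↔
      ∀ p : ℕ, 1 ≤ p → ((PROJ p '' C)ᶜ : Set (Fin p → ℝ≥0)).Nonempty →
        ∀ g : (Fin p → ℝ≥0) → ℝ, ContinuousOn g (PROJ p '' C)ᶜ →
          (∀ u, 0 ≤ g u) → (∃ B : ℝ, ∀ u, g u ≤ B) →
          (∃ r > 0, ∀ u, dL1Set u (PROJ p '' C) < r → g u = 0) →
          Tendsto (fun n => ∫ x, g (PROJ p x) ∂ μn n) atTop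
            (𝓝 (∫ x, g (PROJ p x) ∂ μ0)) := by
  constructor
  · -- forward
    intro HMO p hp hcne g hgc hg0 hgB hgv
    obtain ⟨B, hB⟩ := hgB
    obtain ⟨r, hr, hrv⟩ := hgv
    rcases C.eq_empty_or_nonempty with rfl | hne
    · have hz : ∀ u, g u = 0 := fun u => hrv u (by
        simp only [Set.image_empty, dL1Set, Set.image_empty, Real.sInf_empty]
        exact hr)
      simp only [hz, MeasureTheory.integral_zero]
      exact tendsto_const_nhds
    · have hPC : (PROJ p '' C).Nonempty := hne.image _
      have hgcont : Continuous g := by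
        rw [continuous_iff_continuousAt]
        intro u
        by_cases hu : u ∈ PROJ p '' C
        · have h0 : dL1Set u (PROJ p '' C) = 0 :=
            le_antisymm (by simpa [dL1_self] using dL1Set_le (u := u) hu) (dL1Set_nonneg _ _)
          have hopen : IsOpen {v | dL1Set v (PROJ p '' C) < r} :=
            isOpen_lt (continuous_dL1Set hPC) continuous_const
          have hmem : {v | dL1Set v (PROJ p '' C) < r} ∈ 𝓝 u :=
            hopen.mem_nhds (by simp [h0, hr])
          refine ContinuousAt.congr (f := fun _ => (0:ℝ)) continuousAt_const ?_
          filter_upwards [hmem] with v hv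
          exact (hrv v hv).symm
        · exact hgc.continuousAt ((hCp p hp).isOpen_compl.mem_nhds hu)
      refine HMO _ ⟨(hgcont.comp (continuous_PROJ p)).continuousOn,
        fun x => hg0 _, ⟨B, fun x => hB _⟩, min r 1 * (2:ℝ)⁻¹^(p+1), by positivity, ?_⟩
      intro x hx
      obtain ⟨y, hy, hdy⟩ := exists_of_dseqSet_lt hne hx
      have h1 : dseq x y < (2:ℝ)⁻¹ ^ p := by
        have : min r 1 * (2:ℝ)⁻¹^(p+1) ≤ 1 * (2:ℝ)⁻¹^(p+1) :=
          mul_le_mul_of_nonneg_right (min_le_right _ _) (by positivity)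
        have h2 : (2:ℝ)⁻¹^(p+1) < (2:ℝ)⁻¹^p := by
          rw [pow_succ]
          nlinarith [pow_pos (show (0:ℝ) < 2⁻¹ by norm_num) p]
        linarith
      have h2 := dL1_le_of_dseq_lt h1
      have h3 : dL1 (PROJ p x) (PROJ p y) < r := by
        have h4 : (2:ℝ)^(p+1) * dseq x y < (2:ℝ)^(p+1) * (min r 1 * (2:ℝ)⁻¹^(p+1)) :=
          mul_lt_mul_of_pos_left hdy (by positivity)
        have h5 : (2:ℝ)^(p+1) * (min r 1 * (2:ℝ)⁻¹^(p+1)) = min r 1 := by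
          rw [← mul_assoc, mul_comm ((2:ℝ)^(p+1)), mul_assoc, ← mul_pow]
          norm_num
        have h6 : min r 1 ≤ r := min_le_left _ _
        linarith
      exact hrv _ (lt_of_le_of_lt (dL1Set_le (Set.mem_image_of_mem _ hy)) h3)
  · -- backward
    intro H f hf
    obtain ⟨hfc, hf0, ⟨B, hfB⟩, r, hr, hfr⟩ := hf
    rcases C.eq_empty_or_nonempty with rfl | hne
    · have hz : ∀ x, f x = 0 := fun x => hfr x (by
        simp only [dseqSet, Set.image_empty, Real.sInf_empty]
        exact hr)
      simp only [hz, MeasureTheory.integral_zero]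
      exact tendsto_const_nhds
    have HFD : FDconv C μ0 μn := H
    have hCz' : ∀ p : ℕ, 1 ≤ p → ∀ z ∈ PROJ p '' C, fillp p z ∈ C := hCz
    have hopen : IsOpen {x | dseqSet x C < r} :=
      isOpen_lt (continuous_dseqSet hne) continuous_const
    have hfcont : Continuous f := by
      rw [continuous_iff_continuousAt]
      intro x
      by_cases hx : x ∈ C
      · have hmem : {y | dseqSet y C < r} ∈ 𝓝 x :=
          hopen.mem_nhds (by simp [dseqSet_eq_zero_of_mem hx, hr])
        refine ContinuousAt.congr (f := fun _ => (0:ℝ)) continuousAt_const ?_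
        filter_upwards [hmem] with y hy
        exact (hfr y hy).symm
      · exact hfc.continuousAt (hC.isOpen_compl.mem_nhds hx)
    have hsupp : ∀ x, f x ≠ 0 → x ∈ {x | r ≤ dseqSet x C} := by
      intro x hx
      by_contra hb
      exact hx (hfr x (by simpa using lt_of_not_ge hb))
    have hAmeas : MeasurableSet {x | r ≤ dseqSet x C} := measurableSet_le_dseqSet hne r
    have hint : ∀ ν : Measure (ℕ → ℝ≥0), MemMOseq C ν → Integrable f ν := fun ν hν =>
      integrable_of_support_subset hfcont hf0 hfB hsupp hAmeas (hν.2 r hr)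
    obtain ⟨M, hMt, hM0, hMn⟩ := stepU hne hμ0 hμn HFD hr
    -- measurability of level-set functions
    have hFnmeas : ∀ ν : Measure (ℕ → ℝ≥0), Measurable fun t : ℝ => ν {x | t < f x} := by
      intro ν
      refine Antitone.measurable fun t s hts => ?_
      exact measure_mono fun x hx => lt_of_le_of_lt hts hx
    have hlevmeas : ∀ t : ℝ, MeasurableSet {x | t < f x} :=
      fun t => (isOpen_lt continuous_const hfcont).measurableSet
    -- limsup bound
    have hlimsup : limsup (fun n => ∫⁻ x, ENNReal.ofReal (f x) ∂ μn n) atTop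
        ≤ ∫⁻ x, ENNReal.ofReal (f x) ∂ μ0 := by
      have heq : ∀ n, (∫⁻ x, ENNReal.ofReal (f x) ∂ μn n)
          = ∫⁻ t in Ioi (0:ℝ), μn n {x | t < f x} := fun n =>
        lintegral_eq_lintegral_meas_lt (μn n) (ae_of_all _ hf0) hfcont.aemeasurable
      have heq0 : (∫⁻ x, ENNReal.ofReal (f x) ∂ μ0)
          = ∫⁻ t in Ioi (0:ℝ), μ0 {x | t ≤ f x} :=
        lintegral_eq_lintegral_meas_le μ0 (ae_of_all _ hf0) hfcont.aemeasurable
      simp only [heq, heq0]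
      have hbd : ∀ n, (fun t : ℝ => μn n {x | t < f x})
          ≤ᵐ[volume.restrict (Ioi 0)] (Ioc (0:ℝ) B).indicator (fun _ => M) := by
        intro n
        refine (ae_restrict_iff' measurableSet_Ioi).2 (ae_of_all _ fun t ht => ?_)
        by_cases htB : t ≤ B
        · rw [Set.indicator_of_mem (Set.mem_Ioc.2 ⟨ht, htB⟩)]
          refine le_trans (measure_mono fun x hx => ?_) (hMn n)
          exact hsupp x (by have : (0:ℝ) < f x := lt_trans ht hx; linarith)
        · have : {x | t < f x} = ∅ := by
            ext x
            simp only [Set.mem_setOf_eq, Set.mem_empty_iff_false, iff_false, not_lt]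
            linarith [hfB x]
          simp [this]
      calc limsup (fun n => ∫⁻ t in Ioi (0:ℝ), μn n {x | t < f x}) atTop
          ≤ ∫⁻ t in Ioi (0:ℝ), limsup (fun n => μn n {x | t < f x}) atTop := by
            refine limsup_lintegral_le _ (fun n => hFnmeas (μn n)) hbd ?_
            rw [lintegral_indicator measurableSet_Ioc, MeasureTheory.setLIntegral_const,
              Measure.restrict_apply measurableSet_Ioc]
            refine ENNReal.mul_ne_top hMt ?_
            refine ne_top_of_le_ne_top (?_ : volume (Ioc (0:ℝ) B) ≠ ⊤)
              (measure_mono Set.inter_subset_left)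
            rw [Real.volume_Ioc]
            exact ENNReal.ofReal_ne_top
        _ ≤ ∫⁻ t in Ioi (0:ℝ), μ0 {x | t ≤ f x} := by
            refine lintegral_mono_ae ((ae_restrict_iff' measurableSet_Ioi).2
              (ae_of_all _ fun t ht => ?_))
            have hsub : {x | t ≤ f x} ⊆ {x | r ≤ dseqSet x C} := fun x hx =>
              hsupp x (by have : (0:ℝ) < f x := lt_of_lt_of_le ht hx; linarith)
            have hstep := stepA hne hCz' hμ0 hμn HFD
              (isClosed_le continuous_const hfcont) hr hsub
            refine le_trans (limsup_le_limsup (Eventually.of_forall fun n => ?_)) hstep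
            exact measure_mono fun x (hx : t < f x) => (le_of_lt hx : t ≤ f x)
    -- liminf bound
    have hliminf : (∫⁻ x, ENNReal.ofReal (f x) ∂ μ0)
        ≤ liminf (fun n => ∫⁻ x, ENNReal.ofReal (f x) ∂ μn n) atTop := by
      have heq : ∀ n, (∫⁻ x, ENNReal.ofReal (f x) ∂ μn n)
          = ∫⁻ t in Ioi (0:ℝ), μn n {x | t < f x} := fun n =>
        lintegral_eq_lintegral_meas_lt (μn n) (ae_of_all _ hf0) hfcont.aemeasurable
      have heq0 : (∫⁻ x, ENNReal.ofReal (f x) ∂ μ0)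
          = ∫⁻ t in Ioi (0:ℝ), μ0 {x | t < f x} :=
        lintegral_eq_lintegral_meas_lt μ0 (ae_of_all _ hf0) hfcont.aemeasurable
      simp only [heq, heq0]
      calc (∫⁻ t in Ioi (0:ℝ), μ0 {x | t < f x})
          ≤ ∫⁻ t in Ioi (0:ℝ), liminf (fun n => μn n {x | t < f x}) atTop := by
            refine lintegral_mono_ae ((ae_restrict_iff' measurableSet_Ioi).2
              (ae_of_all _ fun t ht => ?_))
            have hsub : {x | t < f x} ⊆ {x | r ≤ dseqSet x C} := fun x hx =>
              hsupp x (by have : (0:ℝ) < f x := lt_trans ht hx; linarith)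
            exact stepB hne hCz' hμ0 hμn HFD (isOpen_lt continuous_const hfcont) hr hsub
        _ ≤ liminf (fun n => ∫⁻ t in Ioi (0:ℝ), μn n {x | t < f x}) atTop :=
            lintegral_liminf_le fun n => hFnmeas (μn n)
    have hmain : Tendsto (fun n => ∫⁻ x, ENNReal.ofReal (f x) ∂ μn n) atTop
        (𝓝 (∫⁻ x, ENNReal.ofReal (f x) ∂ μ0)) :=
      tendsto_of_le_liminf_of_limsup_le hliminf hlimsup
    have hL0 : (∫⁻ x, ENNReal.ofReal (f x) ∂ μ0) ≠ ⊤ := by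
      rw [← ofReal_integral_eq_lintegral_ofReal (hint μ0 hμ0) (ae_of_all _ hf0)]
      exact ENNReal.ofReal_ne_top
    have hconv := (ENNReal.tendsto_toReal hL0).comp hmain
    have hreq : ∀ ν : Measure (ℕ → ℝ≥0), MemMOseq C ν →
        (∫ x, f x ∂ ν) = (∫⁻ x, ENNReal.ofReal (f x) ∂ ν).toReal := fun ν hν =>
      MeasureTheory.integral_eq_lintegral_of_nonneg_ae (ae_of_all _ hf0)
        hfcont.aestronglyMeasurable
    rw [show (fun n => ∫ x, f x ∂ μn n) = fun n =>
      (∫⁻ x, ENNReal.ofReal (f x) ∂ μn n).toReal from funext fun n => hreq _ (hμn n),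
      hreq μ0 hμ0]
    exact hconv
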